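/- Let A be a tridiagonal n x n nonnegative matrix whose subdiagonal and superdiagonal entries are all nonzero, with A_{11} = 0 and n \geq 2. Then rank_+(A) = 2 + rank_+(A'), where A' is the matrix obtained from A by deleting the first two rows and the first two columns. -/

import Mathlib

noncomputable def nnRank {α β : Type} [Fintype α] [Fintype β] (A : Matrix α β ℝ) : ℕ :=
  sInf {r : ℕ | ∃ u : Fin r → α → ℝ, ∃ v : Fin r → β → ℝ,
    (∀ t i, 0 ≤ u t i) ∧ (∀ t j, 0 ≤ v t j) ∧ ∀ i j, A i j = ∑ t, u t i * v t j}

/-- Padding lemma: a nonneg decomposition over any fintype γ with card ≤ r gives membership. -/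
lemma pad_mem {α β γ : Type} [Fintype α] [Fintype β] [Fintype γ] (A : Matrix α β ℝ)
    (r : ℕ) (hcard : Fintype.card γ ≤ r)
    (u : γ → α → ℝ) (v : γ → β → ℝ)
    (hu : ∀ t i, 0 ≤ u t i) (hv : ∀ t j, 0 ≤ v t j)
    (hAd : ∀ i j, A i j = ∑ t, u t i * v t j) :
    r ∈ {r : ℕ | ∃ u : Fin r → α → ℝ, ∃ v : Fin r → β → ℝ,
      (∀ t i, 0 ≤ u t i) ∧ (∀ t j, 0 ≤ v t j) ∧ ∀ i j, A i j = ∑ t, u t i * v t j} := by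
  classical
  obtain ⟨f⟩ : Nonempty (γ ↪ Fin r) :=
    Function.Embedding.nonempty_of_card_le (by simpa using hcard)
  refine ⟨fun t => if h : ∃ s, f s = t then u h.choose else 0,
          fun t => if h : ∃ s, f s = t then v h.choose else 0, ?_, ?_, ?_⟩
  · intro t i; dsimp only; split
    · exact hu _ _
    · exact le_rfl
  · intro t j; dsimp only; split
    · exact hv _ _
    · exact le_rfl
  · intro i j
    rw [hAd i j]
    rw [← Finset.sum_subset (Finset.subset_univ (Finset.univ.image f))]
    · rw [Finset.sum_image (fun a _ b _ h => f.injective h)]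
      refine Finset.sum_congr rfl fun s _ => ?_
      have h1 : ∃ s', f s' = f s := ⟨s, rfl⟩
      have h2 : h1.choose = s := f.injective h1.choose_spec
      simp [h1, h2]
    · intro t _ ht
      have hne : ¬ ∃ s, f s = t := by
        rintro ⟨s, rfl⟩; exact ht (Finset.mem_image_of_mem f (Finset.mem_univ s))
      simp [hne]

/-- The decomposition set is nonempty for a nonnegative matrix. -/
lemma nnRank_set_nonempty {α β : Type} [Fintype α] [Fintype β]
    (A : Matrix α β ℝ) (hA : ∀ i j, 0 ≤ A i j) :
    {r : ℕ | ∃ u : Fin r → α → ℝ, ∃ v : Fin r → β → ℝ,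
      (∀ t i, 0 ≤ u t i) ∧ (∀ t j, 0 ≤ v t j) ∧ ∀ i j, A i j = ∑ t, u t i * v t j}.Nonempty := by
  classical
  refine ⟨Fintype.card (α × β), pad_mem A _ le_rfl
    (fun s i => if i = s.1 then A s.1 s.2 else 0)
    (fun s j => if j = s.2 then 1 else 0) ?_ ?_ ?_⟩
  · intro t i; split
    · exact hA _ _
    · exact le_rfl
  · intro t j; split
    · exact zero_le_one
    · exact le_rfl
  · intro i j
    rw [Fintype.sum_prod_type]
    simp [Finset.sum_ite_eq', mul_ite]

theorem stmt_14 {n : ℕ} (A : Matrix (Fin (n + 2)) (Fin (n + 2)) ℝ)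
    (hA : ∀ i j, 0 ≤ A i j)
    (htri : ∀ i j : Fin (n + 2), 1 < |(i : ℤ) - (j : ℤ)| → A i j = 0)
    (hsub : ∀ i j : Fin (n + 2), (i : ℕ) = (j : ℕ) + 1 → 0 < A i j)
    (hsup : ∀ i j : Fin (n + 2), (j : ℕ) = (i : ℕ) + 1 → 0 < A i j)
    (h11 : A 0 0 = 0) :
    nnRank A = 2 + nnRank (A.submatrix (fun i : Fin n => i.succ.succ)
      (fun j : Fin n => j.succ.succ)) := by
  classical
  set A' := A.submatrix (fun i : Fin n => i.succ.succ) (fun j : Fin n => j.succ.succ) with hA'def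
  have hA'nn : ∀ i j, 0 ≤ A' i j := fun i j => hA _ _
  have hval2 : ∀ k : Fin n, ((k.succ.succ : Fin (n+2)) : ℕ) = (k : ℕ) + 2 := by
    intro k; simp [Fin.val_succ]
  have htri' : ∀ i j : Fin (n + 2), ((i : ℕ) + 1 < (j : ℕ) ∨ (j : ℕ) + 1 < (i : ℕ)) →
      A i j = 0 := by
    intro i j h
    apply htri
    rw [lt_abs]
    omega
  have h0j : ∀ j : Fin n, A 0 j.succ.succ = 0 := by
    intro j; apply htri'; left; rw [hval2]; simp
  have hi0 : ∀ i : Fin n, A i.succ.succ 0 = 0 := by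
    intro i; apply htri'; right; rw [hval2]; simp
  have h01 : (0 : ℝ) < A 0 1 := hsup 0 1 (by simp)
  have h10 : (0 : ℝ) < A 1 0 := hsub 1 0 (by simp)
  apply le_antisymm
  · -- upper bound
    set r' := nnRank A' with hr'
    obtain ⟨u, v, hu, hv, hd⟩ := Nat.sInf_mem (nnRank_set_nonempty A' hA'nn)
    set L : (Fin n → ℝ) → Fin (n+2) → ℝ :=
      fun w i => if h : 2 ≤ (i : ℕ) then w ⟨(i : ℕ) - 2, by omega⟩ else 0 with hL
    have hL0 : ∀ w, L w 0 = 0 := by intro w; simp [hL]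
    have hL1 : ∀ w, L w ((0 : Fin (n+1)).succ) = 0 := by intro w; simp [hL]
    have hLs : ∀ w (k : Fin n), L w k.succ.succ = w k := by
      intro w k
      have h2 : 2 ≤ ((k.succ.succ : Fin (n+2)) : ℕ) := by rw [hval2]; omega
      rw [hL]
      simp only [h2, dif_pos]
      congr 1
    have hLnn : ∀ w, (∀ k, 0 ≤ w k) → ∀ i, 0 ≤ L w i := by
      intro w hw i; rw [hL]; dsimp only; split
      · exact hw _
      · exact le_rfl
    set u1 : Fin (n+2) → ℝ := fun i => if (i : ℕ) = 1 then 0 else A i 1 with hu1d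
    set e1 : Fin (n+2) → ℝ := fun j => if (j : ℕ) = 1 then 1 else 0 with he1d
    set v2 : Fin (n+2) → ℝ := fun j => A 1 j with hv2d
    have he0 : e1 0 = 0 := by rw [he1d]; simp
    have he1 : e1 ((0 : Fin (n+1)).succ) = 1 := by rw [he1d]; simp
    have hek : ∀ k : Fin n, e1 k.succ.succ = 0 := by
      intro k; rw [he1d]; simp [hval2]
    have hu10 : u1 0 = A 0 1 := by rw [hu1d]; simp
    have hu11 : u1 ((0 : Fin (n+1)).succ) = 0 := by rw [hu1d]; simp
    have hu1k : ∀ k : Fin n, u1 k.succ.succ = A k.succ.succ 1 := by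
      intro k; rw [hu1d]; simp [hval2]
    have he1nn : ∀ i, 0 ≤ e1 i := by
      intro i; rw [he1d]; dsimp only; split
      · exact zero_le_one
      · exact le_rfl
    have hu1nn : ∀ i, 0 ≤ u1 i := by
      intro i; rw [hu1d]; dsimp only; split
      · exact le_rfl
      · exact hA _ _
    have hmem : (2 + r') ∈ {r : ℕ | ∃ u : Fin r → Fin (n+2) → ℝ, ∃ v : Fin r → Fin (n+2) → ℝ,
        (∀ t i, 0 ≤ u t i) ∧ (∀ t j, 0 ≤ v t j) ∧ ∀ i j, A i j = ∑ t, u t i * v t j} := by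
      refine pad_mem (γ := Option (Option (Fin r'))) A (2 + r')
        (by simp only [Fintype.card_option, Fintype.card_fin]; omega)
        (fun s => match s with
          | none => u1
          | some none => e1
          | some (some t) => L (u t))
        (fun s => match s with
          | none => e1
          | some none => v2
          | some (some t) => L (v t)) ?_ ?_ ?_
      · rintro (_ | _ | t) i
        · exact hu1nn i
        · exact he1nn i
        · exact hLnn _ (fun k => hu t k) i
      · rintro (_ | _ | t) j
        · exact he1nn j
        · exact hA _ _
        · exact hLnn _ (fun k => hv t k) j
      · intro i j
        rw [Fintype.sum_option, Fintype.sum_option]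
        dsimp only
        induction i using Fin.cases with
        | zero =>
          simp only [hL0, zero_mul, Finset.sum_const_zero, add_zero]
          rw [hu10, he0, zero_mul, add_zero]
          induction j using Fin.cases with
          | zero => rw [he0, mul_zero, h11]
          | succ j' =>
            induction j' using Fin.cases with
            | zero => rw [he1, mul_one, Fin.succ_zero_eq_one]
            | succ l => rw [hek, mul_zero, h0j]
        | succ i' =>
          induction i' using Fin.cases with
          | zero =>
            simp only [hu11, he1, zero_mul, one_mul, zero_add, hL1, Finset.sum_const_zero,
              add_zero]
            rw [hv2d, Fin.succ_zero_eq_one]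
          | succ k =>
            simp only [hu1k, hek, zero_mul, zero_add, hLs]
            induction j using Fin.cases with
            | zero =>
              simp only [he0, mul_zero, hL0, Finset.sum_const_zero, zero_add]
              exact hi0 k
            | succ j' =>
              induction j' using Fin.cases with
              | zero =>
                simp only [he1, mul_one, hL1, mul_zero, Finset.sum_const_zero, add_zero]
                rw [Fin.succ_zero_eq_one]
              | succ l =>
                simp only [hek, mul_zero, zero_add, hLs]
                exact hd k l
    calc nnRank A ≤ 2 + r' := Nat.sInf_le hmem
      _ = 2 + nnRank A' := by rw [hr']
  · -- lower bound
    obtain ⟨u, v, hu, hv, hd⟩ := Nat.sInf_mem (nnRank_set_nonempty A hA)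
    set r := nnRank A with hr
    have hzero : ∀ i j, A i j = 0 → ∀ t, u t i * v t j = 0 := by
      intro i j hij t
      have hsum : ∑ t, u t i * v t j = 0 := by rw [← hd i j, hij]
      have := (Finset.sum_eq_zero_iff_of_nonneg
        (fun t _ => mul_nonneg (hu t i) (hv t j))).mp hsum
      exact this t (Finset.mem_univ t)
    set S1 : Finset (Fin r) := Finset.univ.filter (fun t => 0 < u t 0) with hS1
    set S2 : Finset (Fin r) := Finset.univ.filter (fun t => 0 < v t 0) with hS2
    have hdisj : Disjoint S1 S2 := by
      rw [Finset.disjoint_left]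
      intro t ht1 ht2
      rw [hS1, Finset.mem_filter] at ht1
      rw [hS2, Finset.mem_filter] at ht2
      have := hzero 0 0 h11 t
      nlinarith [ht1.2, ht2.2]
    have hS1ne : S1.Nonempty := by
      have hne : ∑ t, u t 0 * v t 1 ≠ 0 := by rw [← hd 0 1]; exact ne_of_gt h01
      obtain ⟨t, _, ht⟩ := Finset.exists_ne_zero_of_sum_ne_zero hne
      refine ⟨t, ?_⟩
      rw [hS1]; refine Finset.mem_filter.mpr ?_
      refine ⟨Finset.mem_univ t, lt_of_le_of_ne (hu t 0) ?_⟩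
      intro h
      exact ht (by rw [← h, zero_mul])
    have hS2ne : S2.Nonempty := by
      have hne : ∑ t, u t 1 * v t 0 ≠ 0 := by rw [← hd 1 0]; exact ne_of_gt h10
      obtain ⟨t, _, ht⟩ := Finset.exists_ne_zero_of_sum_ne_zero hne
      refine ⟨t, ?_⟩
      rw [hS2]; refine Finset.mem_filter.mpr ?_
      refine ⟨Finset.mem_univ t, lt_of_le_of_ne (hv t 0) ?_⟩
      intro h
      exact ht (by rw [← h, mul_zero])
    have hcard12 : 2 ≤ (S1 ∪ S2).card := by
      rw [Finset.card_union_of_disjoint hdisj]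
      have := Finset.card_pos.mpr hS1ne
      have := Finset.card_pos.mpr hS2ne
      omega
    have hcardle : (S1 ∪ S2).card ≤ r := by
      calc (S1 ∪ S2).card ≤ Finset.univ.card := Finset.card_le_univ _
        _ = r := by simp
    set T : Finset (Fin r) := (S1 ∪ S2)ᶜ with hT
    have hTcard : T.card = r - (S1 ∪ S2).card := by
      rw [hT, Finset.card_compl]; simp
    -- terms outside T vanish on the submatrix
    have hvanish : ∀ t : Fin r, t ∉ T → ∀ (k l : Fin n),
        u t k.succ.succ * v t l.succ.succ = 0 := by
      intro t ht k l
      rw [hT, Finset.mem_compl, not_not, Finset.mem_union] at ht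
      rcases ht with ht | ht
      · rw [hS1, Finset.mem_filter] at ht
        have hvt : v t l.succ.succ = 0 := by
          have := hzero 0 l.succ.succ (h0j l) t
          rcases mul_eq_zero.mp this with h | h
          · exact absurd h (ne_of_gt ht.2)
          · exact h
        rw [hvt, mul_zero]
      · rw [hS2, Finset.mem_filter] at ht
        have hut : u t k.succ.succ = 0 := by
          have := hzero k.succ.succ 0 (hi0 k) t
          rcases mul_eq_zero.mp this with h | h
          · exact h
          · exact absurd h (ne_of_gt ht.2)
        rw [hut, zero_mul]
    have hd' : ∀ k l, A' k l = ∑ t : {x // x ∈ T}, u t.1 k.succ.succ * v t.1 l.succ.succ := by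
      intro k l
      have h1 : A' k l = ∑ t : Fin r, u t k.succ.succ * v t l.succ.succ :=
        hd k.succ.succ l.succ.succ
      rw [h1, ← Finset.sum_subset (Finset.subset_univ T)
        (fun t _ ht => hvanish t ht k l)]
      exact (Finset.sum_attach T _).symm
    have hmem' : (r - 2) ∈ {r : ℕ | ∃ u : Fin r → Fin n → ℝ, ∃ v : Fin r → Fin n → ℝ,
        (∀ t i, 0 ≤ u t i) ∧ (∀ t j, 0 ≤ v t j) ∧ ∀ i j, A' i j = ∑ t, u t i * v t j} := by
      refine pad_mem (γ := {x // x ∈ T}) A' (r - 2) ?_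
        (fun t k => u t.1 k.succ.succ) (fun t l => v t.1 l.succ.succ)
        (fun t k => hu _ _) (fun t l => hv _ _) hd'
      rw [Fintype.card_coe, hTcard]
      omega
    have hle : nnRank A' ≤ r - 2 := Nat.sInf_le hmem'
    omega
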